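/- (Corollary, dominant face as convex hull of priority points) Let p ∈ (0,1) and n ≥ 1. The dominant face F = { λ ∈ ℝ^n : λ_j ≥ 0 for all j, Σ_{j∈S} λ_j ≤ 1 − p^{|S|} for every nonempty S ⊆ {1,…,n}, and Σ_{j=1}^{n} λ_j = 1 − p^n } equals the convex hull in ℝ^n of the finite set { λ^π : π a permutation of {1,…,n} }, where λ^π_{π(i)} = (1−p) p^{i−1}. Consequently every point of the dominant face is a convex combination of rate vectors achievable by priority-based acknowledgment policies. -/

import Mathlib

lemma geom_sum_mul_aux (p : ℝ) (k : ℕ) :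
    (1 - p) * ∑ i ∈ Finset.range k, p ^ i = 1 - p ^ k := by
  induction k with
  | zero => simp
  | succ k ih => rw [Finset.sum_range_succ, mul_add, ih, pow_succ]; ring

lemma sum_pow_le_sum_range (p : ℝ) (hp0 : 0 ≤ p) (hp1 : p ≤ 1) (T : Finset ℕ) :
    ∑ i ∈ T, p ^ i ≤ ∑ i ∈ Finset.range T.card, p ^ i := by
  induction T using Finset.strongInduction with
  | _ T ih =>
    rcases T.eq_empty_or_nonempty with rfl | hT
    · simp
    · have hmem : T.max' hT ∈ T := T.max'_mem hT
      have hsubset : T ⊆ Finset.range (T.max' hT + 1) := by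
        intro i hi
        exact Finset.mem_range.mpr (Nat.lt_succ_of_le (T.le_max' i hi))
      have hcard : T.card ≤ T.max' hT + 1 := by
        simpa using Finset.card_le_card hsubset
      have hcard1 : (T.erase (T.max' hT)).card = T.card - 1 :=
        Finset.card_erase_of_mem hmem
      have hpos : 1 ≤ T.card := Finset.card_pos.mpr hT
      have hih := ih (T.erase (T.max' hT)) (Finset.erase_ssubset hmem)
      have hsum : ∑ i ∈ T.erase (T.max' hT), p ^ i + p ^ (T.max' hT) = ∑ i ∈ T, p ^ i :=
        Finset.sum_erase_add _ _ hmem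
      have hle : T.card - 1 ≤ T.max' hT := Nat.sub_le_iff_le_add.mpr hcard
      have hpow : p ^ (T.max' hT) ≤ p ^ (T.card - 1) :=
        pow_le_pow_of_le_one hp0 hp1 hle
      have hrange : ∑ i ∈ Finset.range T.card, p ^ i
          = ∑ i ∈ Finset.range (T.card - 1), p ^ i + p ^ (T.card - 1) := by
        have hc : T.card - 1 + 1 = T.card := by omega
        nth_rewrite 1 [← hc]
        rw [Finset.sum_range_succ]
      rw [hrange, ← hsum]
      rw [hcard1] at hih
      linarith

lemma pow_strict_aux (p : ℝ) (hp0 : 0 < p) (hp1 : p < 1) {u a b v : ℕ}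
    (hua : u < a) (hub : u < b) (hsum : u + v = a + b) :
    p ^ a + p ^ b < p ^ u + p ^ v := by
  have ha : a = u + (a - u) := by omega
  have hv : v = b + (a - u) := by omega
  rw [ha, hv, pow_add, pow_add]
  have h1 : p ^ b < p ^ u := pow_lt_pow_right_of_lt_one₀ hp0 hp1 hub
  have h2 : p ^ (a - u) < 1 := pow_lt_one₀ hp0.le hp1 (by omega)
  nlinarith [mul_pos (sub_pos.2 h1) (sub_pos.2 h2)]
lemma classify_aux (p : ℝ) (hp0 : 0 < p) (hp1 : p < 1) (n : ℕ) (hn : 1 ≤ n)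
    (x : Fin n → ℝ)
    (hxle : ∀ S : Finset (Fin n), S.Nonempty → (∑ j ∈ S, x j) ≤ 1 - p ^ S.card)
    (hxtot : (∑ j : Fin n, x j) = 1 - p ^ n)
    (hsep : ∀ a b : Fin n, a ≠ b → ∃ S : Finset (Fin n), S.Nonempty ∧
        (∑ j ∈ S, x j) = 1 - p ^ S.card ∧ ¬(a ∈ S ↔ b ∈ S)) :
    ∃ e : Equiv.Perm (Fin n), ∀ a, x a = (1 - p) * p ^ ((e a : Fin n) : ℕ) := by
  classical
  have hnE : Nonempty (Fin n) := ⟨⟨0, hn⟩⟩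
  set Tight : Finset (Fin n) → Prop :=
    fun S => S.Nonempty ∧ ∑ j ∈ S, x j = 1 - p ^ S.card with hTight
  -- univ is tight
  have hUniv : Tight Finset.univ := by
    refine ⟨Finset.univ_nonempty, ?_⟩
    rw [Finset.card_univ, Fintype.card_fin]
    exact hxtot
  -- tight sets form a chain
  have chain : ∀ S T, Tight S → Tight T → S ⊆ T ∨ T ⊆ S := by
    intro S T hS hT
    by_contra hc
    push_neg at hc
    obtain ⟨hST, hTS⟩ := hc
    have hsum : ∑ j ∈ S ∪ T, x j + ∑ j ∈ S ∩ T, x j = ∑ j ∈ S, x j + ∑ j ∈ T, x j :=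
      Finset.sum_union_inter
    have hU : ∑ j ∈ S ∪ T, x j ≤ 1 - p ^ (S ∪ T).card :=
      hxle _ (hS.1.mono Finset.subset_union_left)
    have hI : ∑ j ∈ S ∩ T, x j ≤ 1 - p ^ (S ∩ T).card := by
      rcases (S ∩ T).eq_empty_or_nonempty with h | h
      · rw [h]; simp
      · exact hxle _ h
    have hc1 : (S ∩ T).card < S.card := by
      apply Finset.card_lt_card
      refine Finset.ssubset_iff_subset_ne.mpr ⟨Finset.inter_subset_left, fun h => hST ?_⟩
      rw [← h]
      exact Finset.inter_subset_right
    have hc2 : (S ∩ T).card < T.card := by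
      apply Finset.card_lt_card
      refine Finset.ssubset_iff_subset_ne.mpr ⟨Finset.inter_subset_right, fun h => hTS ?_⟩
      rw [← h]
      exact Finset.inter_subset_left
    have hc3 : (S ∩ T).card + (S ∪ T).card = S.card + T.card :=
      Finset.card_inter_add_card_union S T
    have hstrict := pow_strict_aux p hp0 hp1 hc1 hc2 hc3
    rw [hS.2, hT.2] at hsum
    linarith
  -- minimal tight set containing each element
  have hMin : ∀ a : Fin n, ∃ M, Tight M ∧ a ∈ M ∧ ∀ S, Tight S → a ∈ S → M ⊆ S := by
    intro a
    have hne : (Finset.univ.filter (fun S : Finset (Fin n) => Tight S ∧ a ∈ S)).Nonempty :=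
      ⟨Finset.univ, by
      simp only [Finset.mem_filter, Finset.mem_univ, true_and]
      exact ⟨hUniv, trivial⟩⟩
    obtain ⟨M, hM, hmin⟩ := Finset.exists_min_image _ Finset.card hne
    simp only [Finset.mem_filter, Finset.mem_univ, true_and] at hM
    refine ⟨M, hM.1, hM.2, ?_⟩
    intro S hS haS
    rcases chain M S hM.1 hS with h | h
    · exact h
    · have hle : M.card ≤ S.card := hmin S (by
        simp only [Finset.mem_filter, Finset.mem_univ, true_and]
        exact ⟨hS, haS⟩)
      rw [Finset.eq_of_subset_of_card_le h hle]
  choose M hMt hMa hMmin using hMin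
  set r : Fin n → ℕ := fun a => (M a).card with hr
  have hr1 : ∀ a, 1 ≤ r a := fun a => Finset.card_pos.mpr (hMt a).1
  have hrn : ∀ a, r a ≤ n := fun a => by
    simpa using Finset.card_le_univ (M a)
  have hrinj : ∀ a b, r a = r b → a = b := by
    intro a b hab
    by_contra hne
    obtain ⟨S, hSne, hSt, hSsep⟩ := hsep a b hne
    have hMeq : M a = M b := by
      rcases chain (M a) (M b) (hMt a) (hMt b) with h | h
      · exact Finset.eq_of_subset_of_card_le h (le_of_eq hab.symm)
      · exact (Finset.eq_of_subset_of_card_le h (le_of_eq hab)).symm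
    by_cases ha : a ∈ S
    · have hb : b ∉ S := fun hb => hSsep ⟨fun _ => hb, fun _ => ha⟩
      exact hb ((hMmin a S ⟨hSne, hSt⟩ ha) (hMeq ▸ hMa b))
    · have hb : b ∈ S := by tauto
      exact ha ((hMmin b S ⟨hSne, hSt⟩ hb) (hMeq ▸ hMa a))
  set σ : Fin n → Fin n := fun a => ⟨r a - 1, by have := hr1 a; have := hrn a; omega⟩ with hσ
  have hσinj : Function.Injective σ := by
    intro a b hab
    apply hrinj
    have h1 := hr1 a; have h2 := hr1 b
    have : r a - 1 = r b - 1 := congrArg Fin.val hab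
    omega
  have hσbij : Function.Bijective σ := (Finite.injective_iff_bijective).mp hσinj
  set e : Equiv.Perm (Fin n) := Equiv.ofBijective σ hσbij with he
  have hkey : ∀ a, x a = (1 - p) * p ^ (r a - 1) := by
    intro a
    rcases eq_or_lt_of_le (hr1 a) with h1 | h2
    · -- r a = 1, M a = {a}
      obtain ⟨c, hc⟩ := Finset.card_eq_one.mp h1.symm
      have hca : c = a := by
        have := hMa a
        rw [hc, Finset.mem_singleton] at this
        exact this.symm
      have ht := (hMt a).2
      rw [hc, hca] at ht
      simp only [Finset.sum_singleton, Finset.card_singleton, pow_one] at ht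
      rw [ht, ← h1]
      simp
    · -- r a ≥ 2, find b with r b = r a - 1
      obtain ⟨b, hb⟩ := hσbij.2 ⟨r a - 2, by have := hrn a; omega⟩
      have hrb : r b = r a - 1 := by
        have hv : r b - 1 = r a - 2 := congrArg Fin.val hb
        have := hr1 b
        omega
      have hlt : r b < r a := by omega
      have hsub : M b ⊆ M a := by
        rcases chain (M b) (M a) (hMt b) (hMt a) with h | h
        · exact h
        · exfalso
          have hcb : r a ≤ r b := Finset.card_le_card h
          omega
      have hanb : a ∉ M b := by
        intro h
        have hle2 : r a ≤ r b := Finset.card_le_card (hMmin a (M b) (hMt b) h)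
        omega
      have hcard : (M a \ M b).card = 1 := by
        rw [Finset.card_sdiff_of_subset hsub]
        show r a - r b = 1
        omega
      have hsd : M a \ M b = {a} := by
        obtain ⟨c, hc⟩ := Finset.card_eq_one.mp hcard
        have hmem : a ∈ M a \ M b := Finset.mem_sdiff.mpr ⟨hMa a, hanb⟩
        rw [hc] at hmem
        rw [hc, Finset.mem_singleton.mp hmem]
      have hsum := Finset.sum_sdiff (f := x) hsub
      rw [hsd, Finset.sum_singleton, (hMt b).2, (hMt a).2] at hsum
      have hsum2 : x a + (1 - p ^ (r b)) = 1 - p ^ (r a) := hsum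
      rw [hrb] at hsum2
      have hpow : p ^ (r a) = p ^ (r a - 1) * p := by
        rw [← pow_succ]
        congr 1
        omega
      have hxa : x a = p ^ (r a - 1) - p ^ (r a) := by linarith [hsum2]
      rw [hxa, hpow]
      ring
  refine ⟨e, fun a => ?_⟩
  have : ((e a : Fin n) : ℕ) = r a - 1 := rfl
  rw [this]
  exact hkey a



/-- **Corollary (dominant face as convex hull of priority points).** Let `p ∈ (0,1)` and
`n ≥ 1`. The dominant face `F` of the stability region (nonnegative `λ` with
`∑_{j∈S} λ_j ≤ 1 - p^{|S|}` for every nonempty `S` and `∑_j λ_j = 1 - pⁿ`) equals the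
convex hull in `ℝⁿ` of the finite set of priority rate vectors
`{λ^π : π a permutation}`, where `λ^π_{π(i)} = (1-p) pⁱ` (zero-indexed). -/
theorem dominant_face_eq_convexHull (p : ℝ) (hp0 : 0 < p) (hp1 : p < 1)
    (n : ℕ) (hn : 1 ≤ n)
    (F : Set (Fin n → ℝ))
    (hF : F = {l : Fin n → ℝ |
        (∀ j, 0 ≤ l j) ∧
        (∀ S : Finset (Fin n), S.Nonempty → (∑ j ∈ S, l j) ≤ 1 - p ^ S.card) ∧
        (∑ j : Fin n, l j) = 1 - p ^ n})
    (lam : Equiv.Perm (Fin n) → Fin n → ℝ)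
    (hlam : ∀ (π : Equiv.Perm (Fin n)) (i : Fin n), lam π (π i) = (1 - p) * p ^ (i : ℕ)) :
    F = convexHull ℝ (Set.range lam) := by
  classical
  subst hF
  set A : Set (Fin n → ℝ) := {l : Fin n → ℝ |
        (∀ j, 0 ≤ l j) ∧
        (∀ S : Finset (Fin n), S.Nonempty → (∑ j ∈ S, l j) ≤ 1 - p ^ S.card) ∧
        (∑ j : Fin n, l j) = 1 - p ^ n} with hA
  have h1p : (0:ℝ) < 1 - p := by linarith
  have hval : ∀ (π : Equiv.Perm (Fin n)) j, lam π j = (1 - p) * p ^ ((π.symm j : Fin n) : ℕ) := by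
    intro π j
    have := hlam π (π.symm j)
    rwa [Equiv.apply_symm_apply] at this
  -- each priority vector lies in A
  have hmem : ∀ π : Equiv.Perm (Fin n), lam π ∈ A := by
    intro π
    refine ⟨fun j => ?_, fun S hS => ?_, ?_⟩
    · rw [hval]
      positivity
    · have hrw : ∑ j ∈ S, lam π j = (1 - p) * ∑ j ∈ S, p ^ ((π.symm j : Fin n) : ℕ) := by
        rw [Finset.mul_sum]
        exact Finset.sum_congr rfl fun j _ => hval π j
      have hinj : Set.InjOn (fun j => ((π.symm j : Fin n) : ℕ)) S := by
        intro u _ v _ h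
        exact π.symm.injective (Fin.val_injective h)
      have himg : ∑ j ∈ S, p ^ ((π.symm j : Fin n) : ℕ)
          = ∑ i ∈ S.image (fun j => ((π.symm j : Fin n) : ℕ)), p ^ i :=
        (Finset.sum_image (fun u hu v hv h => hinj hu hv h)).symm
      have hcard : (S.image (fun j => ((π.symm j : Fin n) : ℕ))).card = S.card :=
        Finset.card_image_of_injOn hinj
      have hle := sum_pow_le_sum_range p hp0.le hp1.le
        (S.image (fun j => ((π.symm j : Fin n) : ℕ)))
      rw [hcard] at hle
      rw [hrw, himg]
      calc (1 - p) * ∑ i ∈ S.image (fun j => ((π.symm j : Fin n) : ℕ)), p ^ i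
          ≤ (1 - p) * ∑ i ∈ Finset.range S.card, p ^ i :=
            mul_le_mul_of_nonneg_left hle h1p.le
        _ = 1 - p ^ S.card := geom_sum_mul_aux p S.card
    · rw [← Equiv.sum_comp π (lam π)]
      simp_rw [hlam π]
      rw [← Finset.mul_sum, Fin.sum_univ_eq_sum_range (fun i => p ^ i) n]
      exact geom_sum_mul_aux p n
  -- convexity
  have hconv : Convex ℝ A := by
    intro u hu v hv a b ha hb hab
    obtain ⟨hu0, hu1, hu2⟩ := hu
    obtain ⟨hv0, hv1, hv2⟩ := hv
    have happ : ∀ j, (a • u + b • v) j = a * u j + b * v j := fun j => rfl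
    have hsum : ∀ S : Finset (Fin n),
        ∑ j ∈ S, (a • u + b • v) j = a * ∑ j ∈ S, u j + b * ∑ j ∈ S, v j := by
      intro S
      simp_rw [happ]
      rw [Finset.sum_add_distrib, Finset.mul_sum, Finset.mul_sum]
    refine ⟨fun j => ?_, fun S hS => ?_, ?_⟩
    · rw [happ]
      exact add_nonneg (mul_nonneg ha (hu0 j)) (mul_nonneg hb (hv0 j))
    · rw [hsum S]
      have h1 := mul_le_mul_of_nonneg_left (hu1 S hS) ha
      have h2 := mul_le_mul_of_nonneg_left (hv1 S hS) hb
      have h3 : a * (1 - p ^ S.card) + b * (1 - p ^ S.card) = 1 - p ^ S.card := by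
        rw [← add_mul, hab, one_mul]
      linarith
    · rw [hsum Finset.univ, hu2, hv2, ← add_mul, hab, one_mul]
  -- closedness
  have hclosed : IsClosed A := by
    have hAeq : A = (⋂ j, {l : Fin n → ℝ | 0 ≤ l j}) ∩
        ((⋂ S : Finset (Fin n), ⋂ _ : S.Nonempty,
            {l : Fin n → ℝ | ∑ j ∈ S, l j ≤ 1 - p ^ S.card}) ∩
         {l : Fin n → ℝ | ∑ j : Fin n, l j = 1 - p ^ n}) := by
      ext l
      simp only [hA, Set.mem_inter_iff, Set.mem_iInter, Set.mem_setOf_eq]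
    rw [hAeq]
    refine IsClosed.inter (isClosed_iInter fun j =>
        isClosed_le continuous_const (continuous_apply j))
      (IsClosed.inter (isClosed_iInter fun S => isClosed_iInter fun _ =>
        isClosed_le (continuous_finset_sum S fun j _ => continuous_apply j) continuous_const)
      (isClosed_eq (continuous_finset_sum Finset.univ fun j _ => continuous_apply j)
        continuous_const))
  -- compactness
  have hsubIcc : A ⊆ Set.pi Set.univ (fun _ : Fin n => Set.Icc (0:ℝ) 1) := by
    rintro l ⟨h0, h1, _⟩ j _
    refine ⟨h0 j, ?_⟩
    have hsing := h1 {j} (Finset.singleton_nonempty j)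
    simp only [Finset.sum_singleton, Finset.card_singleton, pow_one] at hsing
    linarith
  have hcomp : IsCompact A :=
    (isCompact_univ_pi fun _ => isCompact_Icc).of_isClosed_subset hclosed hsubIcc
  -- extreme points are priority vectors
  have hext : A.extremePoints ℝ ⊆ Set.range lam := by
    intro x hx
    rw [mem_extremePoints] at hx
    obtain ⟨hxA, hxext⟩ := hx
    obtain ⟨hx0, hxle, hxtot⟩ := hxA
    have hsep : ∀ a b : Fin n, a ≠ b → ∃ S : Finset (Fin n), S.Nonempty ∧
        (∑ j ∈ S, x j) = 1 - p ^ S.card ∧ ¬(a ∈ S ↔ b ∈ S) := by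
      intro a b hab
      by_contra hno
      push_neg at hno
      -- positivity of coordinates
      have hxpos : ∀ j : Fin n, 0 < x j := by
        intro j
        obtain ⟨c, hc⟩ : ∃ c : Fin n, c ≠ j := by
          rcases eq_or_ne a j with h | h
          · refine ⟨b, ?_⟩
            rw [← h]
            exact Ne.symm hab
          · exact ⟨a, h⟩
        have hne : (Finset.univ.erase j).Nonempty :=
          ⟨c, Finset.mem_erase.mpr ⟨hc, Finset.mem_univ c⟩⟩
        have hcarde : (Finset.univ.erase j).card = n - 1 := by
          rw [Finset.card_erase_of_mem (Finset.mem_univ j), Finset.card_univ, Fintype.card_fin]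
        have hle := hxle _ hne
        rw [hcarde] at hle
        have hsum : x j + ∑ i ∈ Finset.univ.erase j, x i = ∑ i : Fin n, x i :=
          Finset.add_sum_erase _ _ (Finset.mem_univ j)
        have hpn : p ^ n = p ^ (n - 1) * p := by
          rw [← pow_succ]
          congr 1
          omega
        have hppos : 0 < p ^ (n - 1) := pow_pos hp0 _
        nlinarith [mul_pos hppos h1p]
      -- the perturbation size
      set NT : Finset (Finset (Fin n)) := Finset.univ.filter
        (fun S => S.Nonempty ∧ ∑ j ∈ S, x j ≠ 1 - p ^ S.card) with hNT
      set E : Finset ℝ := insert (x a) (insert (x b)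
        (NT.image (fun S => 1 - p ^ S.card - ∑ j ∈ S, x j))) with hE
      have hEne : E.Nonempty := ⟨x a, Finset.mem_insert_self _ _⟩
      set ε : ℝ := E.min' hEne with hε
      have hεpos : 0 < ε := by
        have hall : ∀ y ∈ E, 0 < y := by
          intro y hy
          simp only [hE, hNT, Finset.mem_insert, Finset.mem_image, Finset.mem_filter,
            Finset.mem_univ, true_and] at hy
          rcases hy with rfl | rfl | ⟨S, ⟨hSne, hSnt⟩, rfl⟩
          · exact hxpos a
          · exact hxpos b
          · exact sub_pos.mpr (lt_of_le_of_ne (hxle S hSne) hSnt)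
        exact hall _ (E.min'_mem hEne)
      have hεa : ε ≤ x a := Finset.min'_le _ _ (Finset.mem_insert_self _ _)
      have hεb : ε ≤ x b := Finset.min'_le _ _
        (Finset.mem_insert_of_mem (Finset.mem_insert_self _ _))
      have hεS : ∀ S : Finset (Fin n), S.Nonempty → ∑ j ∈ S, x j ≠ 1 - p ^ S.card →
          ∑ j ∈ S, x j + ε ≤ 1 - p ^ S.card := by
        intro S hSne hSnt
        have hminle : ε ≤ 1 - p ^ S.card - ∑ j ∈ S, x j := by
          apply Finset.min'_le
          simp only [hE, hNT, Finset.mem_insert, Finset.mem_image, Finset.mem_filter,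
            Finset.mem_univ, true_and]
          exact Or.inr (Or.inr ⟨S, ⟨hSne, hSnt⟩, rfl⟩)
        linarith
      -- perturbed points are in A
      have hpoint : ∀ c d : Fin n, c ≠ d → ε ≤ x d →
          (∀ S : Finset (Fin n), S.Nonempty → ∑ j ∈ S, x j = 1 - p ^ S.card →
            (c ∈ S ↔ d ∈ S)) →
          (fun j => x j + ((if j = c then ε else 0) + (if j = d then -ε else 0))) ∈ A := by
        intro c d hcd hεd hiff
        have hsplit : ∀ S : Finset (Fin n),
            ∑ j ∈ S, (x j + ((if j = c then ε else 0) + (if j = d then -ε else 0)))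
            = ∑ j ∈ S, x j + ((if c ∈ S then ε else 0) + (if d ∈ S then -ε else 0)) := by
          intro S
          rw [Finset.sum_add_distrib, Finset.sum_add_distrib,
            Finset.sum_ite_eq' S c (fun _ => ε), Finset.sum_ite_eq' S d (fun _ => -ε)]
        refine ⟨fun j => ?_, fun S hS => ?_, ?_⟩
        · by_cases h1 : j = c
          · have h2 : j ≠ d := by rw [h1]; exact hcd
            simp only [if_pos h1, if_neg h2]
            have := hxpos j
            linarith
          · by_cases h2 : j = d
            · simp only [if_neg h1, if_pos h2]
              have hh : ε ≤ x j := by rw [h2]; exact hεd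
              linarith
            · simp only [if_neg h1, if_neg h2]
              linarith [hxpos j]
        · rw [hsplit S]
          by_cases ht : ∑ j ∈ S, x j = 1 - p ^ S.card
          · have hiffS := hiff S hS ht
            by_cases hc : c ∈ S
            · rw [if_pos hc, if_pos (hiffS.mp hc)]
              linarith [ht.le]
            · rw [if_neg hc, if_neg (fun hd => hc (hiffS.mpr hd))]
              linarith [ht.le]
          · have hS2 := hεS S hS ht
            have hS1 := hxle S hS
            by_cases hc : c ∈ S
            · by_cases hd : d ∈ S
              · rw [if_pos hc, if_pos hd]; linarith
              · rw [if_pos hc, if_neg hd]; linarith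
            · by_cases hd : d ∈ S
              · rw [if_neg hc, if_pos hd]; linarith
              · rw [if_neg hc, if_neg hd]; linarith
        · rw [hsplit Finset.univ, if_pos (Finset.mem_univ c), if_pos (Finset.mem_univ d), hxtot]
          ring
      set y : Fin n → ℝ :=
        fun j => x j + ((if j = a then ε else 0) + (if j = b then -ε else 0)) with hy
      set z : Fin n → ℝ :=
        fun j => x j + ((if j = b then ε else 0) + (if j = a then -ε else 0)) with hz
      have hyA : y ∈ A := hpoint a b hab hεb hno
      have hzA : z ∈ A := hpoint b a (Ne.symm hab) hεa
        (fun S h1 h2 => (hno S h1 h2).symm)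
      have hseg : x ∈ openSegment ℝ y z := by
        refine ⟨1/2, 1/2, by norm_num, by norm_num, by norm_num, ?_⟩
        funext j
        show (1/2 : ℝ) * y j + (1/2 : ℝ) * z j = x j
        rw [hy, hz]
        simp only
        split_ifs <;> ring
      obtain ⟨hy1, _⟩ := hxext y hyA z hzA hseg
      have hcf : x a + ((if a = a then ε else 0) + (if a = b then -ε else 0)) = x a :=
        congrFun hy1 a
      rw [if_pos rfl, if_neg hab] at hcf
      linarith
    obtain ⟨e, he⟩ := classify_aux p hp0 hp1 n hn x hxle hxtot hsep
    refine ⟨e.symm, ?_⟩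
    funext j
    rw [hval e.symm j, Equiv.symm_symm]
    exact (he j).symm
  -- conclusion
  have hsub1 : convexHull ℝ (Set.range lam) ⊆ A :=
    convexHull_min (by rintro y ⟨π, rfl⟩; exact hmem π) hconv
  have hsub2 : A ⊆ convexHull ℝ (Set.range lam) := by
    have hKM := closure_convexHull_extremePoints hcomp hconv
    have hclosed2 : IsClosed (convexHull ℝ (Set.range lam)) :=
      (Set.finite_range lam).isClosed_convexHull (𝕜 := ℝ)
    rw [← hKM, ← hclosed2.closure_eq]
    exact closure_mono (convexHull_mono hext)
  exact Set.Subset.antisymm hsub2 hsub1
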